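/- Let p be an n×n complex orthogonal projection matrix that is block diagonal with blocks of size 1 or 2, whose entries are all real and nonnegative. If every column of p has Euclidean norm strictly less than 1/√2, then p = 0. -/

import Mathlib

open Matrix

/-- An `n × n` orthogonal projection matrix that is block diagonal with blocks of
size 1 or 2 (encoded by the partial-sum sequence `s` of the block sizes), all of
whose entries are real and nonnegative, and all of whose columns have Euclidean
norm strictly less than `1/√2`, is zero. -/
theorem small_column_block_projection_eq_zero
    (n : ℕ) (p : Matrix (Fin n) (Fin n) ℂ)
    (hproj : pᴴ = p ∧ p * p = p)
    (hreal : ∀ i j, (p i j).im = 0 ∧ 0 ≤ (p i j).re)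
    (hblock : ∃ (r : ℕ) (s : Fin (r + 1) → ℕ),
      s 0 = 0 ∧ s (Fin.last r) = n ∧
      (∀ t : Fin r, s t.succ = s t.castSucc + 1 ∨ s t.succ = s t.castSucc + 2) ∧
      ∀ i j : Fin n,
        (¬ ∃ t : Fin r, s t.castSucc ≤ i.val ∧ i.val < s t.succ ∧
            s t.castSucc ≤ j.val ∧ j.val < s t.succ) → p i j = 0)
    (hcol : ∀ j, Real.sqrt (∑ i, ‖p i j‖ ^ 2) < 1 / Real.sqrt 2) :
    p = 0 := by
  classical
  obtain ⟨herm, hidem⟩ := hproj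
  obtain ⟨r, s, hs0, hslast, hstep, hzero⟩ := hblock
  -- s is strictly monotone
  have hmono : StrictMono s := by
    rw [Fin.strictMono_iff_lt_succ]
    intro t; rcases hstep t with h | h <;> omega
  have hsn : ∀ u : Fin (r+1), s u ≤ n :=
    fun u => hslast ▸ hmono.monotone (Fin.le_last u)
  have hle : ∀ t t' : Fin r, t.val < t'.val → s t.succ ≤ s t'.castSucc := by
    intro t t' h
    exact hmono.monotone (by simp [Fin.le_def]; omega)
  have huniq : ∀ (t t' : Fin r) (v : ℕ), s t.castSucc ≤ v → v < s t.succ →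
      s t'.castSucc ≤ v → v < s t'.succ → t = t' := by
    intro t t' v h1 h2 h3 h4
    by_contra hne
    rcases Nat.lt_or_ge t.val t'.val with h | h
    · have := hle t t' h; omega
    · have hlt : t'.val < t.val := lt_of_le_of_ne h (fun e => hne (Fin.ext e.symm))
      have := hle t' t hlt; omega
  -- each index lies in some block
  have hexists : ∀ i : Fin n, ∃ t : Fin r, s t.castSucc ≤ i.val ∧ i.val < s t.succ := by
    intro i
    set T := Finset.univ.filter (fun u : Fin (r+1) => s u ≤ i.val) with hT
    have h0 : (0 : Fin (r+1)) ∈ T := by simp [hT, hs0]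
    have hTne : T.Nonempty := ⟨0, h0⟩
    set u := T.max' hTne with hu
    have hum : u ∈ T := T.max'_mem hTne
    have hsu : s u ≤ i.val := by simpa [hT] using hum
    have hin : i.val < n := i.isLt
    have hune : u ≠ Fin.last r := by
      intro e; rw [e, hslast] at hsu; omega
    have hulr : u.val < r := by
      have := Fin.le_last u
      have : u.val ≤ r := this
      rcases lt_or_eq_of_le this with h | h
      · exact h
      · exact absurd (Fin.ext h) hune
    have hcs : (⟨u.val, hulr⟩ : Fin r).castSucc = u := by
      apply Fin.ext; simp
    refine ⟨⟨u.val, hulr⟩, ?_, ?_⟩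
    · rw [hcs]; exact hsu
    · by_contra hcon
      push_neg at hcon
      have hmem : (Fin.succ ⟨u.val, hulr⟩ : Fin (r+1)) ∈ T := by
        rw [hT, Finset.mem_filter]
        exact ⟨Finset.mem_univ _, hcon⟩
      have hle' := T.le_max' _ hmem
      rw [← hu] at hle'
      have hv : u.val + 1 ≤ u.val := by
        have := Fin.le_def.mp hle'
        simpa using this
      omega
  -- off-block entries vanish
  have hoff : ∀ (t : Fin r) (i k : Fin n), s t.castSucc ≤ i.val → i.val < s t.succ →
      (¬ (s t.castSucc ≤ k.val ∧ k.val < s t.succ)) → p i k = 0 ∧ p k i = 0 := by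
    intro t i k h1 h2 hk
    constructor
    · apply hzero
      rintro ⟨t', ht1, ht2, ht3, ht4⟩
      obtain rfl := huniq t' t i.val ht1 ht2 h1 h2
      exact hk ⟨ht3, ht4⟩
    · apply hzero
      rintro ⟨t', ht1, ht2, ht3, ht4⟩
      obtain rfl := huniq t' t i.val ht3 ht4 h1 h2
      exact hk ⟨ht1, ht2⟩
  -- hermitian + real entries: symmetry
  have hsym : ∀ i j, p i j = p j i := by
    intro i j
    have h1 : p i j = (starRingEnd ℂ) (p j i) := by
      conv_lhs => rw [← herm]
      simp [Matrix.conjTranspose_apply]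
    rw [h1]
    exact Complex.conj_eq_iff_im.mpr (hreal j i).1
  -- diagonal entries are < 1/2
  have hdiaglt : ∀ j : Fin n, (p j j).re < 1/2 := by
    intro j
    have h1 : (p j j).re = ∑ i, ‖p i j‖ ^ 2 := by
      have h := congrFun (congrFun hidem j) j
      rw [Matrix.mul_apply] at h
      rw [← h, Complex.re_sum]
      apply Finset.sum_congr rfl
      intro k _
      have hk : p j k = (starRingEnd ℂ) (p k j) := by
        conv_lhs => rw [← herm]
        simp [Matrix.conjTranspose_apply]
      rw [hk]
      rw [show (starRingEnd ℂ) (p k j) * p k j = ((Complex.normSq (p k j) : ℝ) : ℂ) by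
        rw [mul_comm, Complex.mul_conj]]
      simp only [Complex.ofReal_re]
      rw [Complex.normSq_eq_norm_sq]
    have h2 := hcol j
    rw [← h1] at h2
    have h3 : (1:ℝ) / Real.sqrt 2 = Real.sqrt (1/2) := by
      rw [one_div, ← Real.sqrt_inv]
      norm_num
    rw [h3] at h2
    have h4 : 0 ≤ (p j j).re := (hreal j j).2
    have := (Real.sqrt_lt_sqrt_iff h4).mp h2
    linarith
  -- a real number a with a = a^2 and a < 1/2 is 0
  have hquad : ∀ a : ℝ, a * a = a → a < 1/2 → a = 0 := by
    intro a h1 h2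
    have : a * (a - 1) = 0 := by ring_nf; linarith [h1]
    rcases mul_eq_zero.mp this with h | h
    · exact h
    · linarith
  have hC : ∀ i j, p i j = ((p i j).re : ℂ) := by
    intro i j
    have := (hreal i j).1
    exact Complex.ext (by simp) (by simp [this])
  -- main
  ext i j
  rw [Matrix.zero_apply]
  obtain ⟨t, hti1, hti2⟩ := hexists i
  by_cases hj : s t.castSucc ≤ j.val ∧ j.val < s t.succ
  · rcases hstep t with hb | hb
    · -- block of size 1
      have hij : i = j := Fin.ext (by omega)
      subst hij
      have hsq : p i i * p i i = p i i := by
        have h := congrFun (congrFun hidem i) i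
        rw [Matrix.mul_apply] at h
        have hs' : (∑ k, p i k * p k i) = p i i * p i i := by
          refine Finset.sum_eq_single i (fun k _ hk => ?_) (fun h => absurd (Finset.mem_univ i) h)
          have hk' : ¬ (s t.castSucc ≤ k.val ∧ k.val < s t.succ) := by
            intro h'; exact hk (Fin.ext (by omega))
          rw [(hoff t i k hti1 hti2 hk').1, zero_mul]
        rw [← hs']
        exact h
      rw [hC i i]
      rw [hC i i] at hsq
      have : ((p i i).re * (p i i).re : ℝ) = (p i i).re := by
        exact_mod_cast hsq
      rw [hquad _ this (hdiaglt i)]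
      simp
    · -- block of size 2
      set m := s t.castSucc with hm
      have hm2 : m + 2 ≤ n := by
        have := hsn t.succ; omega
      set i0 : Fin n := ⟨m, by omega⟩ with hi0
      set i1 : Fin n := ⟨m+1, by omega⟩ with hi1
      have hi0v : i0.val = m := rfl
      have hi1v : i1.val = m + 1 := rfl
      have hne01 : i0 ≠ i1 := by
        intro e
        have := congrArg Fin.val e
        omega
      have hi0b : s t.castSucc ≤ i0.val ∧ i0.val < s t.succ := by constructor <;> omega
      have hi1b : s t.castSucc ≤ i1.val ∧ i1.val < s t.succ := by constructor <;> omega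
      -- compute (p*p) u v = p u i0 * p i0 v + p u i1 * p i1 v for u, v in the block
      have hsum2 : ∀ u v : Fin n, s t.castSucc ≤ u.val → u.val < s t.succ →
          p u i0 * p i0 v + p u i1 * p i1 v = p u v := by
        intro u v hu1 hu2
        have h := congrFun (congrFun hidem u) v
        rw [Matrix.mul_apply] at h
        rw [← h]
        rw [show (∑ k, p u k * p k v) = ∑ k ∈ ({i0, i1} : Finset (Fin n)), p u k * p k v by
          refine (Finset.sum_subset (Finset.subset_univ _) ?_).symm
          intro k _ hk
          simp only [Finset.mem_insert, Finset.mem_singleton] at hk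
          push_neg at hk
          have hk1 : k.val ≠ m := fun e => hk.1 (Fin.ext (by omega))
          have hk2 : k.val ≠ m + 1 := fun e => hk.2 (Fin.ext (by omega))
          have hk' : ¬ (s t.castSucc ≤ k.val ∧ k.val < s t.succ) := by omega
          rw [(hoff t u k hu1 hu2 hk').1, zero_mul]]
        rw [Finset.sum_pair hne01]
      have e1 := hsum2 i0 i0 hi0b.1 hi0b.2
      have e2 := hsum2 i1 i1 hi1b.1 hi1b.2
      have e3 := hsum2 i0 i1 hi0b.1 hi0b.2
      have hs10 : p i1 i0 = p i0 i1 := (hsym i1 i0)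
      rw [hs10] at e1 e2
      set A := (p i0 i0).re
      set B := (p i0 i1).re
      set D := (p i1 i1).re
      rw [hC i0 i0] at e1 e3
      rw [hC i0 i1] at e1 e2 e3
      rw [hC i1 i1] at e2 e3
      have E1 : A * A + B * B = A := by exact_mod_cast e1
      have E2 : B * B + D * D = D := by exact_mod_cast e2
      have E3 : A * B + B * D = B := by exact_mod_cast e3
      have hA : A < 1/2 := hdiaglt i0
      have hD : D < 1/2 := hdiaglt i1
      have hB0 : B = 0 := by
        by_contra hB
        have : A + D = 1 := by
          have : B * (A + D - 1) = 0 := by ring_nf; nlinarith [E3]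
          rcases mul_eq_zero.mp this with h | h
          · exact absurd h hB
          · linarith
        linarith
      have hA0 : A = 0 := by
        apply hquad A _ hA
        nlinarith [E1, hB0]
      have hD0 : D = 0 := by
        apply hquad D _ hD
        nlinarith [E2, hB0]
      have z00 : p i0 i0 = 0 := by rw [hC i0 i0]; exact_mod_cast hA0
      have z01 : p i0 i1 = 0 := by rw [hC i0 i1]; exact_mod_cast hB0
      have z10 : p i1 i0 = 0 := by rw [hs10]; exact z01
      have z11 : p i1 i1 = 0 := by rw [hC i1 i1]; exact_mod_cast hD0
      have hicase : i = i0 ∨ i = i1 := by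
        rcases Nat.lt_or_ge i.val (m+1) with h | h
        · left; exact Fin.ext (by omega)
        · right; exact Fin.ext (by omega)
      have hjcase : j = i0 ∨ j = i1 := by
        rcases Nat.lt_or_ge j.val (m+1) with h | h
        · left; exact Fin.ext (by omega)
        · right; exact Fin.ext (by omega)
      rcases hicase with h | h <;> rcases hjcase with h' | h' <;> rw [h, h'] <;> assumption
  · exact (hoff t i j hti1 hti2 hj).1
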